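/- For every real α > 0 and every real x > 0, ∑_{m=0}^∞ 1/(m!·Γ(m+α+1))·(x/2)^{2m+α} = (1/(π x Γ(α)))·(x/2)^α · ∫_0^{π/2} ∫_0^π 2·(sin ϑ)^{2α−1}·sin φ · [ sinh(x·cos ϑ·sin φ) + x·cos ϑ·sin φ·cosh(x·cos ϑ·sin φ) ] dφ dϑ. -/

import Mathlib

open Real MeasureTheory
open Set intervalIntegral

lemma hasSum_sinh_add (t : ℝ) :
    HasSum (fun m : ℕ => (2 * (m:ℝ) + 2) * t ^ (2 * m + 1) / (2 * m + 1).factorial)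
      (Real.sinh t + t * Real.cosh t) := by
  have h1 := Real.hasSum_sinh t
  have h2 := (Real.hasSum_cosh t).mul_left t
  have h := h1.add h2
  convert h using 2 with m
  have hfac : ((2 * m + 1).factorial : ℝ) = (2 * m + 1) * (2 * m).factorial := by
    rw [Nat.factorial_succ]; push_cast; ring
  have hne : ((2 * m + 1: ℕ) : ℝ) ≠ 0 := by positivity
  rw [hfac] at *
  have h2m1 : (0:ℝ) < 2 * m + 1 := by positivity
  have hf : (0:ℝ) < (2 * m).factorial := by positivity
  field_simp
  ring

lemma integrableOn_sin_rpow {r : ℝ} (hr : -1 < r) :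
    IntegrableOn (fun ϑ => Real.sin ϑ ^ r) (Set.Ioc 0 (π / 2)) := by
  set C : ℝ := max 1 ((2 / π) ^ r) with hC
  have hC1 : (1:ℝ) ≤ C := le_max_left _ _
  have hpow : IntervalIntegrable (fun x : ℝ => x ^ r) volume 0 (π / 2) :=
    intervalIntegrable_rpow' hr
  have hbase : IntegrableOn (fun x : ℝ => x ^ r) (Set.Ioc 0 (π / 2)) := hpow.1
  have hCbase : IntegrableOn (fun x : ℝ => C * x ^ r) (Set.Ioc 0 (π / 2)) :=
    hbase.const_mul C
  refine hCbase.integrable.mono ?_ ?_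
  · exact (Real.measurable_sin.pow_const r).aestronglyMeasurable
  · rw [ae_restrict_iff' measurableSet_Ioc]
    filter_upwards with ϑ hϑ
    have h0 : 0 < ϑ := hϑ.1
    have hs0 : 0 ≤ Real.sin ϑ := Real.sin_nonneg_of_nonneg_of_le_pi h0.le
      (le_trans hϑ.2 (by linarith [Real.pi_pos]))
    rw [Real.norm_eq_abs, abs_of_nonneg (Real.rpow_nonneg hs0 r), Real.norm_eq_abs,
      abs_of_nonneg (by positivity)]
    rcases le_or_gt 0 r with h | h
    · calc Real.sin ϑ ^ r ≤ ϑ ^ r := Real.rpow_le_rpow hs0 (Real.sin_le h0.le) h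
        _ ≤ C * ϑ ^ r := le_mul_of_one_le_left (by positivity) hC1
    · have hjordan : 2 / π * ϑ ≤ Real.sin ϑ := Real.mul_le_sin h0.le hϑ.2
      have hpos : 0 < 2 / π * ϑ := by positivity
      calc Real.sin ϑ ^ r ≤ (2 / π * ϑ) ^ r :=
            Real.rpow_le_rpow_of_nonpos hpos hjordan h.le
        _ = (2 / π) ^ r * ϑ ^ r := Real.mul_rpow (by positivity) h0.le
        _ ≤ C * ϑ ^ r := by
            have : (2 / π) ^ r ≤ C := le_max_right _ _
            exact mul_le_mul_of_nonneg_right this (by positivity)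

lemma wallis_prod (n : ℕ) : ∏ i ∈ Finset.range n, (2 * (i:ℝ) + 1) / (2 * i + 2)
    = (2 * n).factorial / (4 ^ n * (n.factorial : ℝ) ^ 2) := by
  induction n with
  | zero => simp
  | succ n ih =>
    rw [Finset.prod_range_succ, ih]
    have h1 : ((2 * (n+1)).factorial : ℝ) = (2*n+2) * ((2*n+1) * (2*n).factorial) := by
      have : 2 * (n+1) = (2*n+1) + 1 := by ring
      rw [this, Nat.factorial_succ, Nat.factorial_succ]; push_cast; ring
    have h2 : ((n+1).factorial : ℝ) = (n+1) * n.factorial := by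
      rw [Nat.factorial_succ]; push_cast; ring
    have hf : ((2*n).factorial : ℝ) ≠ 0 := by positivity
    have hnf : (n.factorial : ℝ) ≠ 0 := by positivity
    rw [h1, h2]
    push_cast
    field_simp
    ring

lemma integral_sin_pow_val (n : ℕ) : (∫ x in (0:ℝ)..π, Real.sin x ^ (2 * n))
    = π * (2 * n).factorial / (4 ^ n * (n.factorial : ℝ) ^ 2) := by
  rw [integral_sin_pow_even, wallis_prod]
  ring

lemma intervalIntegrable_mul_sin_rpow {r : ℝ} (hr : -1 < r) {h : ℝ → ℝ}
    (hh : Measurable h) (C : ℝ) (hC : ∀ y, |h y| ≤ C) :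
    IntervalIntegrable (fun ϑ => h ϑ * Real.sin ϑ ^ r) volume 0 (π / 2) := by
  rw [intervalIntegrable_iff_integrableOn_Ioc_of_le (by positivity)]
  exact (integrableOn_sin_rpow hr).integrable.bdd_mul
    hh.aestronglyMeasurable (ae_of_all _ fun y => hC y)

lemma B_zero {α : ℝ} (hα : 0 < α) :
    ∫ ϑ in (0:ℝ)..(π/2), Real.cos ϑ * Real.sin ϑ ^ (2 * α - 1) = 1 / (2 * α) := by
  have h2α : (0:ℝ) < 2 * α := by linarith
  have hcont : ContinuousOn (fun ϑ : ℝ => Real.sin ϑ ^ (2*α) / (2*α)) (Set.Icc 0 (π/2)) := by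
    apply ContinuousOn.div_const
    exact (Real.continuous_sin.continuousOn.rpow_const fun x _ => Or.inr h2α.le)
  have hderiv : ∀ ϑ ∈ Set.Ioo (0:ℝ) (π/2),
      HasDerivAt (fun ϑ : ℝ => Real.sin ϑ ^ (2*α) / (2*α))
        (Real.cos ϑ * Real.sin ϑ ^ (2*α-1)) ϑ := by
    intro ϑ hϑ
    have hs : 0 < Real.sin ϑ := Real.sin_pos_of_pos_of_lt_pi hϑ.1
      (lt_trans hϑ.2 (by linarith [Real.pi_pos]))
    have h1 : HasDerivAt (fun ϑ : ℝ => Real.sin ϑ ^ (2*α))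
        (2*α * Real.sin ϑ ^ (2*α-1) * Real.cos ϑ) ϑ := by
      have := (Real.hasDerivAt_rpow_const (p := 2*α) (Or.inl hs.ne')).comp ϑ (Real.hasDerivAt_sin ϑ)
      exact this
    have := h1.div_const (2*α)
    refine this.congr_deriv (Eq.symm ?_)
    field_simp
  have hint : IntervalIntegrable (fun ϑ => Real.cos ϑ * Real.sin ϑ ^ (2*α-1)) volume 0 (π/2) :=
    intervalIntegrable_mul_sin_rpow (by linarith) Real.measurable_cos 1
      (fun y => abs_cos_le_one y)
  have := intervalIntegral.integral_eq_sub_of_hasDerivAt_of_le (by positivity)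
    hcont hderiv hint
  rw [this]
  simp [Real.sin_pi_div_two, Real.one_rpow, Real.zero_rpow (by positivity : 2*α ≠ 0)]

lemma B_succ {α : ℝ} (hα : 0 < α) (m : ℕ) :
    ∫ ϑ in (0:ℝ)..(π/2), Real.cos ϑ ^ (2*(m+1)+1) * Real.sin ϑ ^ (2*α-1)
      = ((m+1) / (m+1+α)) *
        ∫ ϑ in (0:ℝ)..(π/2), Real.cos ϑ ^ (2*m+1) * Real.sin ϑ ^ (2*α-1) := by
  have hr : (-1:ℝ) < 2*α - 1 := by linarith
  set f : ℝ → ℝ := fun ϑ =>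
    (2*α + (2*(m:ℝ)+2)) * (Real.cos ϑ ^ (2*(m+1)+1) * Real.sin ϑ ^ (2*α-1))
      - (2*(m:ℝ)+2) * (Real.cos ϑ ^ (2*m+1) * Real.sin ϑ ^ (2*α-1)) with hf
  have hint1 : IntervalIntegrable
      (fun ϑ => Real.cos ϑ ^ (2*(m+1)+1) * Real.sin ϑ ^ (2*α-1)) volume 0 (π/2) :=
    intervalIntegrable_mul_sin_rpow hr (Real.measurable_cos.pow_const _) 1
      (fun y => by rw [abs_pow]; exact pow_le_one₀ (abs_nonneg _) (abs_cos_le_one y))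
  have hint2 : IntervalIntegrable
      (fun ϑ => Real.cos ϑ ^ (2*m+1) * Real.sin ϑ ^ (2*α-1)) volume 0 (π/2) :=
    intervalIntegrable_mul_sin_rpow hr (Real.measurable_cos.pow_const _) 1
      (fun y => by rw [abs_pow]; exact pow_le_one₀ (abs_nonneg _) (abs_cos_le_one y))
  have hintf : IntervalIntegrable f volume 0 (π/2) :=
    ((hint1.const_mul _).sub (hint2.const_mul _))
  -- FTC for G
  set G : ℝ → ℝ := fun ϑ => Real.cos ϑ ^ (2*m+2) * Real.sin ϑ ^ (2*α) with hG
  have hGcont : ContinuousOn G (Set.Icc 0 (π/2)) := by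
    apply ContinuousOn.mul
    · exact (Real.continuous_cos.pow _).continuousOn
    · exact Real.continuous_sin.continuousOn.rpow_const fun x _ => Or.inr (by linarith)
  have hGderiv : ∀ ϑ ∈ Set.Ioo (0:ℝ) (π/2), HasDerivAt G (f ϑ) ϑ := by
    intro ϑ hϑ
    have hs : 0 < Real.sin ϑ := Real.sin_pos_of_pos_of_lt_pi hϑ.1
      (lt_trans hϑ.2 (by linarith [Real.pi_pos]))
    have h1 : HasDerivAt (fun ϑ : ℝ => Real.cos ϑ ^ (2*m+2))
        ((2*(m:ℝ)+2) * Real.cos ϑ ^ (2*m+1) * (-Real.sin ϑ)) ϑ := by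
      have := (Real.hasDerivAt_cos ϑ).pow (2*m+2)
      refine this.congr_deriv (Eq.symm ?_)
      push_cast; ring_nf
    have h2 : HasDerivAt (fun ϑ : ℝ => Real.sin ϑ ^ (2*α))
        (2*α * Real.sin ϑ ^ (2*α-1) * Real.cos ϑ) ϑ := by
      have := (Real.hasDerivAt_rpow_const (p := 2*α) (Or.inl hs.ne')).comp ϑ (Real.hasDerivAt_sin ϑ)
      exact this
    have hprod := h1.mul h2
    refine hprod.congr_deriv (Eq.symm ?_)
    have e1 : Real.sin ϑ ^ (2*α) = Real.sin ϑ ^ (2*α-1) * Real.sin ϑ := by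
      rw [← Real.rpow_add_one hs.ne' (2*α-1)]; ring_nf
    rw [hf]
    simp only
    rw [e1]
    have e2 : Real.sin ϑ ^ 2 = 1 - Real.cos ϑ ^ 2 := by
      have := Real.sin_sq_add_cos_sq ϑ; linarith
    have e3 : Real.cos ϑ ^ (2*(m+1)+1) = Real.cos ϑ ^ (2*m+1) * Real.cos ϑ ^ 2 := by
      rw [← pow_add]; ring_nf
    have e4 : Real.cos ϑ ^ (2*m+2) = Real.cos ϑ ^ (2*m+1) * Real.cos ϑ := by
      rw [← pow_succ]
    rw [e3, e4]
    linear_combination ((2*(m:ℝ)+2)) * Real.cos ϑ ^ (2*m+1) * Real.sin ϑ ^ (2*α-1) * e2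
  have hG0 : G 0 = 0 := by
    simp [hG, Real.zero_rpow (by positivity : 2*α ≠ 0)]
  have hGpi : G (π/2) = 0 := by
    simp [hG]
  have hFTC := intervalIntegral.integral_eq_sub_of_hasDerivAt_of_le
    (by positivity : (0:ℝ) ≤ π/2) hGcont hGderiv hintf
  rw [hG0, hGpi, sub_zero] at hFTC
  have hsplit : ∫ ϑ in (0:ℝ)..(π/2), f ϑ
      = (2*α + (2*(m:ℝ)+2)) * (∫ ϑ in (0:ℝ)..(π/2), Real.cos ϑ ^ (2*(m+1)+1) * Real.sin ϑ ^ (2*α-1))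
        - (2*(m:ℝ)+2) * ∫ ϑ in (0:ℝ)..(π/2), Real.cos ϑ ^ (2*m+1) * Real.sin ϑ ^ (2*α-1) := by
    rw [hf, intervalIntegral.integral_sub (hint1.const_mul _) (hint2.const_mul _),
      intervalIntegral.integral_const_mul, intervalIntegral.integral_const_mul]
  rw [hFTC] at hsplit
  have hpos : (0:ℝ) < 2*α + (2*(m:ℝ)+2) := by positivity
  have : (2*α + (2*(m:ℝ)+2)) * (∫ ϑ in (0:ℝ)..(π/2), Real.cos ϑ ^ (2*(m+1)+1) * Real.sin ϑ ^ (2*α-1))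
      = (2*(m:ℝ)+2) * ∫ ϑ in (0:ℝ)..(π/2), Real.cos ϑ ^ (2*m+1) * Real.sin ϑ ^ (2*α-1) := by
    linarith
  have hne : (m:ℝ)+1+α ≠ 0 := by positivity
  field_simp
  linarith [this]

lemma B_val {α : ℝ} (hα : 0 < α) (m : ℕ) :
    ∫ ϑ in (0:ℝ)..(π/2), Real.cos ϑ ^ (2*m+1) * Real.sin ϑ ^ (2*α-1)
      = m.factorial * Real.Gamma α / (2 * Real.Gamma (m + α + 1)) := by
  induction m with
  | zero =>
    have h1 : Real.Gamma ((0:ℕ) + α + 1) = α * Real.Gamma α := by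
      norm_num
      rw [Real.Gamma_add_one hα.ne']
    rw [h1]
    have hΓ : 0 < Real.Gamma α := Real.Gamma_pos_of_pos hα
    simp only [pow_one, Nat.factorial_zero, Nat.cast_one, one_mul]
    rw [show (2*0+1) = 1 by norm_num]
    simp only [pow_one]
    rw [B_zero hα]
    field_simp
  | succ m ih =>
    rw [B_succ hα m, ih]
    have h1 : Real.Gamma ((m+1 : ℕ) + α + 1) = ((m:ℝ) + α + 1) * Real.Gamma (m + α + 1) := by
      have : ((m+1 : ℕ) : ℝ) + α + 1 = ((m:ℝ) + α + 1) + 1 := by push_cast; ring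
      rw [this, Real.Gamma_add_one (by positivity)]
    rw [h1]
    have hΓ : 0 < Real.Gamma ((m:ℝ) + α + 1) := Real.Gamma_pos_of_pos (by positivity)
    have h2 : ((m+1 : ℕ).factorial : ℝ) = ((m:ℝ)+1) * m.factorial := by
      rw [Nat.factorial_succ]; push_cast; ring
    rw [h2]
    have hne1 : (m:ℝ) + 1 + α ≠ 0 := by positivity
    have hne2 : (m:ℝ) + α + 1 ≠ 0 := by positivity
    have hfac : (m.factorial : ℝ) ≠ 0 := by positivity
    field_simp
    ring

lemma fact_two_mul_le (n : ℕ) : ((2*n).factorial : ℝ) ≤ 4 ^ n * (n.factorial : ℝ)^2 := by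
  induction n with
  | zero => norm_num
  | succ n ih =>
    have h1 : ((2*(n+1)).factorial : ℝ) = (2*(n:ℝ)+2) * ((2*(n:ℝ)+1) * (2*n).factorial) := by
      have : 2 * (n+1) = (2*n+1) + 1 := by ring
      rw [this, Nat.factorial_succ, Nat.factorial_succ]; push_cast; ring
    have h2 : (((n+1)).factorial : ℝ) = ((n:ℝ)+1) * n.factorial := by
      rw [Nat.factorial_succ]; push_cast; ring
    rw [h1, h2]
    have hf : (0:ℝ) < (2*n).factorial := by positivity
    have h4 : (0:ℝ) < 4 ^ n := by positivity
    calc (2*(n:ℝ)+2) * ((2*(n:ℝ)+1) * (2*n).factorial)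
        ≤ (2*(n:ℝ)+2) * ((2*(n:ℝ)+2) * (4 ^ n * (n.factorial : ℝ)^2)) := by
          apply mul_le_mul_of_nonneg_left _ (by positivity)
          apply mul_le_mul (by linarith) ih (by positivity) (by positivity)
      _ = 4 ^ (n+1) * (((n:ℝ)+1) * n.factorial)^2 := by ring
  -- done

lemma inner_eq {c : ℝ} (hc : 0 ≤ c) :
    (∫ φ in (0:ℝ)..π, Real.sin φ *
      (Real.sinh (c * Real.sin φ) + c * Real.sin φ * Real.cosh (c * Real.sin φ)))
    = ∑' m : ℕ, (2*(m:ℝ)+2) / (2*m+1).factorial * c^(2*m+1) *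
        (π * (2*(m+1)).factorial / (4^(m+1) * ((m+1).factorial : ℝ)^2)) := by
  set F : ℕ → ℝ → ℝ := fun m φ =>
    (2*(m:ℝ)+2) / (2*m+1).factorial * c^(2*m+1) * Real.sin φ ^ (2*m+2) with hF
  have hptwise : ∀ φ : ℝ, HasSum (fun m => F m φ)
      (Real.sin φ * (Real.sinh (c * Real.sin φ)
        + c * Real.sin φ * Real.cosh (c * Real.sin φ))) := by
    intro φ
    have := (hasSum_sinh_add (c * Real.sin φ)).mul_left (Real.sin φ)
    convert this using 2 with m
    · rfl
    rw [hF]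
    simp only
    rw [mul_pow]
    ring
  have hFcont : ∀ m : ℕ, Continuous (F m) := fun m =>
    (continuous_const.mul ((Real.continuous_sin).pow _))
  have hFint : ∀ m : ℕ, Integrable (F m) (volume.restrict (Set.Ioc 0 π)) := fun m =>
    (hFcont m).integrableOn_Ioc
  have hFnonneg : ∀ m φ, 0 ≤ F m φ := by
    intro m φ
    rw [hF]
    simp only
    have hs : 0 ≤ Real.sin φ ^ (2*m+2) := Even.pow_nonneg ⟨m+1, by ring⟩ _
    positivity
  have hSval : ∀ m : ℕ, (∫ φ in Set.Ioc (0:ℝ) π, Real.sin φ ^ (2*m+2))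
      = π * (2*(m+1)).factorial / (4^(m+1) * ((m+1).factorial : ℝ)^2) := by
    intro m
    rw [show 2*m+2 = 2*(m+1) by ring, ← intervalIntegral.integral_of_le Real.pi_pos.le]
    exact integral_sin_pow_val (m+1)
  have hFintval : ∀ m : ℕ, (∫ φ, F m φ ∂(volume.restrict (Set.Ioc 0 π)))
      = (2*(m:ℝ)+2) / (2*m+1).factorial * c^(2*m+1) *
        (π * (2*(m+1)).factorial / (4^(m+1) * ((m+1).factorial : ℝ)^2)) := by
    intro m
    rw [hF]
    simp only
    rw [MeasureTheory.integral_const_mul, hSval m]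
  have hgsum : Summable (fun m : ℕ => (2*π*c) * (c^2)^m / m.factorial) := by
    simpa [mul_div_assoc] using (Real.summable_pow_div_factorial (c^2)).mul_left (2*π*c)
  have hsummable : Summable (fun m : ℕ => ∫ φ, ‖F m φ‖ ∂(volume.restrict (Set.Ioc 0 π))) := by
    have hnormint : ∀ m : ℕ, (∫ φ, ‖F m φ‖ ∂(volume.restrict (Set.Ioc 0 π)))
        = ∫ φ, F m φ ∂(volume.restrict (Set.Ioc 0 π)) := by
      intro m
      congr 1 with φ
      exact Real.norm_of_nonneg (hFnonneg m φ)
    apply Summable.of_nonneg_of_le _ _ hgsum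
    · intro m
      rw [hnormint m, hFintval m]
      have hs : (0:ℝ) < (2*m+1).factorial := by positivity
      have hs2 : (0:ℝ) < ((m+1).factorial : ℝ) := by positivity
      positivity
    · intro m
      rw [hnormint m, hFintval m]
      have hfle := fact_two_mul_le (m+1)
      have hfr : π * ((2*(m+1)).factorial : ℝ) / (4^(m+1) * ((m+1).factorial : ℝ)^2) ≤ π := by
        rw [div_le_iff₀ (by positivity)]
        nlinarith [Real.pi_pos]
      have h1 : (2*(m:ℝ)+2) / (2*m+1).factorial ≤ 2 / (2*m).factorial := by
        rw [Nat.factorial_succ]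
        rw [div_le_div_iff₀ (by positivity) (by positivity)]
        push_cast
        nlinarith [(Nat.cast_pos (α := ℝ)).mpr (Nat.factorial_pos (2*m))]
      have h2 : c^(2*m+1) = c * (c^2)^m := by rw [← pow_mul]; ring
      have h3 : ((m.factorial : ℝ)) ≤ (2*m).factorial := by
        exact_mod_cast Nat.factorial_le (by omega)
      have hm : (0:ℝ) < m.factorial := by positivity
      have h2m : (0:ℝ) < (2*m).factorial := by positivity
      have hval : (0:ℝ) ≤ π * ((2*(m+1)).factorial : ℝ) / (4^(m+1) * ((m+1).factorial : ℝ)^2) := by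
        positivity
      calc (2*(m:ℝ)+2) / (2*m+1).factorial * c^(2*m+1) *
            (π * (2*(m+1)).factorial / (4^(m+1) * ((m+1).factorial : ℝ)^2))
          ≤ (2 / (2*m).factorial) * c^(2*m+1) * π := by
            apply mul_le_mul (mul_le_mul_of_nonneg_right h1 (by positivity)) hfr hval
              (by positivity)
        _ ≤ (2 / (m.factorial : ℝ)) * c^(2*m+1) * π := by
            apply mul_le_mul_of_nonneg_right (mul_le_mul_of_nonneg_right _ (by positivity))
              Real.pi_pos.le
            exact div_le_div_of_nonneg_left (by norm_num) hm h3
        _ = (2 * π * c) * (c^2)^m / m.factorial := by rw [h2]; field_simp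
  have hswap := MeasureTheory.integral_tsum_of_summable_integral_norm hFint hsummable
  rw [intervalIntegral.integral_of_le Real.pi_pos.le]
  have heq : ∀ φ : ℝ, (∑' m, F m φ) = Real.sin φ *
      (Real.sinh (c * Real.sin φ) + c * Real.sin φ * Real.cosh (c * Real.sin φ)) :=
    fun φ => (hptwise φ).tsum_eq
  calc (∫ φ in Set.Ioc (0:ℝ) π, Real.sin φ *
        (Real.sinh (c * Real.sin φ) + c * Real.sin φ * Real.cosh (c * Real.sin φ)))
      = ∫ φ in Set.Ioc (0:ℝ) π, (∑' m, F m φ) := by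
        apply MeasureTheory.integral_congr_ae
        filter_upwards with φ using (heq φ).symm
    _ = ∑' m, ∫ φ, F m φ ∂(volume.restrict (Set.Ioc 0 π)) := hswap.symm
    _ = ∑' m : ℕ, (2*(m:ℝ)+2) / (2*m+1).factorial * c^(2*m+1) *
        (π * (2*(m+1)).factorial / (4^(m+1) * ((m+1).factorial : ℝ)^2)) := by
        exact tsum_congr hFintval

lemma gamma_lower {α : ℝ} (hα : 0 < α) (m : ℕ) :
    α * m.factorial * Real.Gamma α ≤ Real.Gamma (m + α + 1) := by
  induction m with
  | zero =>
    simp only [Nat.cast_zero, zero_add, Nat.factorial_zero, Nat.cast_one, mul_one]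
    rw [show α + 1 = α + 1 from rfl, Real.Gamma_add_one hα.ne']
  | succ m ih =>
    have h1 : ((m+1 : ℕ) : ℝ) + α + 1 = ((m:ℝ) + α + 1) + 1 := by push_cast; ring
    rw [h1, Real.Gamma_add_one (by positivity)]
    have hΓ : 0 < Real.Gamma ((m:ℝ) + α + 1) := Real.Gamma_pos_of_pos (by positivity)
    have h2 : ((m+1 : ℕ).factorial : ℝ) = ((m:ℝ)+1) * m.factorial := by
      rw [Nat.factorial_succ]; push_cast; ring
    rw [h2]
    have hge : ((m:ℝ)+1) * (α * m.factorial * Real.Gamma α)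
        ≤ ((m:ℝ)+1) * Real.Gamma ((m:ℝ) + α + 1) :=
      mul_le_mul_of_nonneg_left ih (by positivity)
    calc α * (((m:ℝ)+1) * m.factorial) * Real.Gamma α
        = ((m:ℝ)+1) * (α * m.factorial * Real.Gamma α) := by ring
      _ ≤ ((m:ℝ)+1) * Real.Gamma ((m:ℝ) + α + 1) := hge
      _ ≤ ((m:ℝ)+α+1) * Real.Gamma ((m:ℝ) + α + 1) := by nlinarith

theorem bessel_I_double_integral_representation (α x : ℝ) (hα : 0 < α) (hx : 0 < x) :
    ∑' m : ℕ, 1 / (m.factorial * Real.Gamma (m + α + 1)) *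
        (x / 2) ^ (2 * (m : ℝ) + α)
      = (1 / (π * x * Real.Gamma α)) * (x / 2) ^ α *
        ∫ ϑ in (0:ℝ)..(π / 2), ∫ φ in (0:ℝ)..π,
          2 * Real.sin ϑ ^ (2 * α - 1) * Real.sin φ *
            (Real.sinh (x * Real.cos ϑ * Real.sin φ) +
              x * Real.cos ϑ * Real.sin φ * Real.cosh (x * Real.cos ϑ * Real.sin φ)) := by
  have hΓα : 0 < Real.Gamma α := Real.Gamma_pos_of_pos hα
  have hr : (-1:ℝ) < 2*α - 1 := by linarith
  -- abbreviations
  set K : ℕ → ℝ := fun m => 2 * ((2*(m:ℝ)+2) / (2*m+1).factorial) * x^(2*m+1) *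
      (π * (2*(m+1)).factorial / (4^(m+1) * ((m+1).factorial : ℝ)^2)) with hK
  have hKnonneg : ∀ m, 0 ≤ K m := by
    intro m
    rw [hK]
    have h1 : (0:ℝ) < (2*m+1).factorial := by positivity
    have h2 : (0:ℝ) < ((m+1).factorial : ℝ) := by positivity
    positivity
  set G : ℕ → ℝ → ℝ := fun m ϑ => (K m * Real.cos ϑ ^ (2*m+1)) * Real.sin ϑ ^ (2*α-1)
    with hG
  -- step 1: the inner integral simplifies
  have step1 : ∀ ϑ ∈ Set.Ioc (0:ℝ) (π/2),
      (∫ φ in (0:ℝ)..π, 2 * Real.sin ϑ ^ (2 * α - 1) * Real.sin φ *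
        (Real.sinh (x * Real.cos ϑ * Real.sin φ) +
          x * Real.cos ϑ * Real.sin φ * Real.cosh (x * Real.cos ϑ * Real.sin φ)))
      = ∑' m, G m ϑ := by
    intro ϑ hϑ
    have hcos : 0 ≤ Real.cos ϑ := Real.cos_nonneg_of_mem_Icc ⟨by linarith [hϑ.1, Real.pi_pos], hϑ.2⟩
    have hc : 0 ≤ x * Real.cos ϑ := by positivity
    have hpull : (∫ φ in (0:ℝ)..π, 2 * Real.sin ϑ ^ (2 * α - 1) * Real.sin φ *
        (Real.sinh (x * Real.cos ϑ * Real.sin φ) +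
          x * Real.cos ϑ * Real.sin φ * Real.cosh (x * Real.cos ϑ * Real.sin φ)))
        = (2 * Real.sin ϑ ^ (2 * α - 1)) * ∫ φ in (0:ℝ)..π, Real.sin φ *
        (Real.sinh (x * Real.cos ϑ * Real.sin φ) +
          x * Real.cos ϑ * Real.sin φ * Real.cosh (x * Real.cos ϑ * Real.sin φ)) := by
      rw [← intervalIntegral.integral_const_mul]
      apply intervalIntegral.integral_congr
      intro φ _
      ring
    rw [hpull, inner_eq hc, ← tsum_mul_left]
    apply tsum_congr
    intro m
    rw [hG, hK]
    simp only
    rw [mul_pow]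
    ring
  -- integrability of G m
  have hGint : ∀ m, IntegrableOn (G m) (Set.Ioc 0 (π/2)) := by
    intro m
    rw [hG]
    have := intervalIntegrable_mul_sin_rpow hr
      (h := fun ϑ => K m * Real.cos ϑ ^ (2*m+1))
      ((measurable_const.mul (Real.measurable_cos.pow_const _))) (K m)
      (fun y => by
        rw [abs_mul, abs_of_nonneg (hKnonneg m), abs_pow]
        calc K m * |Real.cos y| ^ (2*m+1) ≤ K m * 1 := by
              apply mul_le_mul_of_nonneg_left _ (hKnonneg m)
              exact pow_le_one₀ (abs_nonneg _) (abs_cos_le_one y)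
          _ = K m := mul_one _)
    rwa [intervalIntegrable_iff_integrableOn_Ioc_of_le (by positivity)] at this
  -- value of ∫ G m
  have hGval : ∀ m, (∫ ϑ in Set.Ioc (0:ℝ) (π/2), G m ϑ)
      = K m * (m.factorial * Real.Gamma α / (2 * Real.Gamma (m + α + 1))) := by
    intro m
    rw [← intervalIntegral.integral_of_le (by positivity : (0:ℝ) ≤ π/2)]
    rw [← B_val hα m, ← intervalIntegral.integral_const_mul]
    apply intervalIntegral.integral_congr
    intro ϑ _
    rw [hG]
    ring
  -- nonnegativity of G m on the interval
  have hGnonneg : ∀ m, ∀ ϑ ∈ Set.Ioc (0:ℝ) (π/2), 0 ≤ G m ϑ := by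
    intro m ϑ hϑ
    have hcos : 0 ≤ Real.cos ϑ := Real.cos_nonneg_of_mem_Icc ⟨by linarith [hϑ.1, Real.pi_pos], hϑ.2⟩
    have hsin : 0 ≤ Real.sin ϑ := Real.sin_nonneg_of_nonneg_of_le_pi hϑ.1.le
      (le_trans hϑ.2 (by linarith [Real.pi_pos]))
    rw [hG]
    simp only
    have := hKnonneg m
    positivity
  -- summability of the integrals of norms
  have hnormval : ∀ m, (∫ ϑ, ‖G m ϑ‖ ∂(volume.restrict (Set.Ioc 0 (π/2))))
      = K m * (m.factorial * Real.Gamma α / (2 * Real.Gamma (m + α + 1))) := by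
    intro m
    rw [← hGval m]
    apply MeasureTheory.integral_congr_ae
    filter_upwards [ae_restrict_mem measurableSet_Ioc] with ϑ hϑ
    exact Real.norm_of_nonneg (hGnonneg m ϑ hϑ)
  have hgsum : Summable (fun m : ℕ => (2*π*x/α) * (x^2)^m / m.factorial) := by
    simpa [mul_div_assoc] using (Real.summable_pow_div_factorial (x^2)).mul_left (2*π*x/α)
  have hsummable : Summable (fun m : ℕ => ∫ ϑ, ‖G m ϑ‖ ∂(volume.restrict (Set.Ioc 0 (π/2)))) := by
    apply Summable.of_nonneg_of_le _ _ hgsum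
    · intro m
      rw [hnormval m]
      have hΓm : 0 < Real.Gamma ((m:ℝ) + α + 1) := Real.Gamma_pos_of_pos (by positivity)
      have := hKnonneg m
      positivity
    · intro m
      rw [hnormval m]
      have hΓm : 0 < Real.Gamma ((m:ℝ) + α + 1) := Real.Gamma_pos_of_pos (by positivity)
      have hBle : (m.factorial : ℝ) * Real.Gamma α / (2 * Real.Gamma (m + α + 1))
          ≤ 1 / (2*α) := by
        rw [div_le_div_iff₀ (by positivity) (by positivity)]
        have := gamma_lower hα m
        nlinarith [this, hΓm]
      have hfle := fact_two_mul_le (m+1)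
      have hfr : π * ((2*(m+1)).factorial : ℝ) / (4^(m+1) * ((m+1).factorial : ℝ)^2) ≤ π := by
        rw [div_le_iff₀ (by positivity)]
        nlinarith [Real.pi_pos]
      have h1 : (2*(m:ℝ)+2) / (2*m+1).factorial ≤ 2 / (2*m).factorial := by
        rw [Nat.factorial_succ, div_le_div_iff₀ (by positivity) (by positivity)]
        push_cast
        nlinarith [(Nat.cast_pos (α := ℝ)).mpr (Nat.factorial_pos (2*m))]
      have h3 : ((m.factorial : ℝ)) ≤ (2*m).factorial := by
        exact_mod_cast Nat.factorial_le (by omega)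
      have hm : (0:ℝ) < m.factorial := by positivity
      have h2m : (0:ℝ) < (2*m).factorial := by positivity
      have hKle : K m ≤ 2 * (2 / (m.factorial : ℝ)) * x^(2*m+1) * π := by
        rw [hK]
        simp only
        have hxp : (0:ℝ) ≤ x^(2*m+1) := by positivity
        have hS : (0:ℝ) ≤ π * ((2*(m+1)).factorial : ℝ) / (4^(m+1) * ((m+1).factorial : ℝ)^2) := by
          positivity
        have ha : (2*(m:ℝ)+2) / (2*m+1).factorial ≤ 2 / (m.factorial : ℝ) :=
          le_trans h1 (div_le_div_of_nonneg_left (by norm_num) hm h3)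
        calc 2 * ((2*(m:ℝ)+2) / (2*m+1).factorial) * x^(2*m+1) *
              (π * (2*(m+1)).factorial / (4^(m+1) * ((m+1).factorial : ℝ)^2))
            ≤ 2 * (2 / (m.factorial : ℝ)) * x^(2*m+1) *
              (π * (2*(m+1)).factorial / (4^(m+1) * ((m+1).factorial : ℝ)^2)) := by
              apply mul_le_mul_of_nonneg_right _ hS
              apply mul_le_mul_of_nonneg_right _ hxp
              exact mul_le_mul_of_nonneg_left ha (by norm_num)
          _ ≤ 2 * (2 / (m.factorial : ℝ)) * x^(2*m+1) * π := by
              apply mul_le_mul_of_nonneg_left hfr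
              positivity
      have hx2 : x^(2*m+1) = x * (x^2)^m := by rw [← pow_mul]; ring
      calc K m * ((m.factorial : ℝ) * Real.Gamma α / (2 * Real.Gamma (m + α + 1)))
          ≤ (2 * (2 / (m.factorial : ℝ)) * x^(2*m+1) * π) * (1/(2*α)) := by
            apply mul_le_mul hKle hBle (by positivity) (by positivity)
        _ = (2*π*x/α) * (x^2)^m / m.factorial := by
            rw [hx2]; field_simp
  -- swap sum and outer integral
  have hswap := MeasureTheory.integral_tsum_of_summable_integral_norm
    (fun m => hGint m) hsummable
  -- rewrite the outer integral
  have houter : (∫ ϑ in (0:ℝ)..(π / 2), ∫ φ in (0:ℝ)..π,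
          2 * Real.sin ϑ ^ (2 * α - 1) * Real.sin φ *
            (Real.sinh (x * Real.cos ϑ * Real.sin φ) +
              x * Real.cos ϑ * Real.sin φ * Real.cosh (x * Real.cos ϑ * Real.sin φ)))
      = ∑' m, K m * (m.factorial * Real.Gamma α / (2 * Real.Gamma (m + α + 1))) := by
    rw [intervalIntegral.integral_of_le (by positivity : (0:ℝ) ≤ π/2)]
    have : (∫ ϑ in Set.Ioc (0:ℝ) (π/2), ∫ φ in (0:ℝ)..π,
          2 * Real.sin ϑ ^ (2 * α - 1) * Real.sin φ *
            (Real.sinh (x * Real.cos ϑ * Real.sin φ) +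
              x * Real.cos ϑ * Real.sin φ * Real.cosh (x * Real.cos ϑ * Real.sin φ)))
        = ∫ ϑ in Set.Ioc (0:ℝ) (π/2), ∑' m, G m ϑ := by
      apply MeasureTheory.integral_congr_ae
      filter_upwards [ae_restrict_mem measurableSet_Ioc] with ϑ hϑ
      exact step1 ϑ hϑ
    rw [this, ← hswap]
    exact tsum_congr hGval
  rw [houter, ← tsum_mul_left]
  apply tsum_congr
  intro m
  -- final algebraic identity
  have hΓm : 0 < Real.Gamma ((m:ℝ) + α + 1) := Real.Gamma_pos_of_pos (by positivity)
  have hfac1 : ((2*(m+1)).factorial : ℝ) = (2*(m:ℝ)+2) * ((2*(m:ℝ)+1) * (2*m).factorial) := by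
    have : 2 * (m+1) = (2*m+1) + 1 := by ring
    rw [this, Nat.factorial_succ, Nat.factorial_succ]; push_cast; ring
  have hfac2 : (((m+1)).factorial : ℝ) = ((m:ℝ)+1) * m.factorial := by
    rw [Nat.factorial_succ]; push_cast; ring
  have hfac3 : ((2*m+1).factorial : ℝ) = (2*(m:ℝ)+1) * (2*m).factorial := by
    rw [Nat.factorial_succ]; push_cast; ring
  have hrpow : (x/2) ^ (2*(m:ℝ) + α) = (x/2)^(2*m) * (x/2)^α := by
    rw [Real.rpow_add (by positivity), ← Real.rpow_natCast (x/2) (2*m)]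
    norm_num
  simp only [hK]
  rw [hrpow, hfac1, hfac2, hfac3]
  have h2m : (0:ℝ) < (2*m).factorial := by positivity
  have hm : (0:ℝ) < m.factorial := by positivity
  have h4 : (0:ℝ) < (4:ℝ)^m := by positivity
  have hxp : (0:ℝ) < (x/2)^α := Real.rpow_pos_of_pos (by positivity) _
  have hxm : x^(2*m+1) = x * x^(2*m) := by ring
  have hhalf : (x/2)^(2*m) = x^(2*m) / 4^m := by
    rw [div_pow]
    congr 1
    rw [pow_mul]
    norm_num
  rw [hxm, hhalf]
  field_simp
  ring
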